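/- Let ρ > 0, c > 0, x₀ ≥ 0, b₀ > 0, and let F : ℝ → ℝ be continuously differentiable with F(0) = 0 and −b₀ ≤ F'(y) ≤ 0 for all y ∈ ℝ. Then for every admissible control u and every trajectory x associated with u such that t ↦ e^{-ρt}(log u(t) − c·x(t)²) is Lebesgue integrable on [0,∞), one has B(u,x) ≤ (1/ρ)·log((ρ + b₀)/√(2ec)). In particular the value function V(x₀) = sup B(u,x) satisfies V(x₀) ≤ (1/ρ)·log((ρ + b₀)/√(2ec)). -/

import Mathlib

open MeasureTheory Filter Set intervalIntegral Topology

/-- gradient inequality for antitone `h` on `Ici 0` -/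
lemma grad_ineq {h : ℝ → ℝ} (hcont : Continuous h)
    (hanti : AntitoneOn h (Set.Ici 0)) {a b : ℝ} (ha : 0 ≤ a) (hb : 0 ≤ b) :
    h b * (b - a) ≤ ∫ r in a..b, h r := by
  rcases le_total a b with hab | hab
  · have h1 : ∫ r in a..b, h b ≤ ∫ r in a..b, h r := by
      apply intervalIntegral.integral_mono_on hab intervalIntegrable_const
        (hcont.intervalIntegrable _ _)
      intro r hr
      exact hanti (le_trans ha hr.1) hb hr.2
    simpa [intervalIntegral.integral_const, smul_eq_mul, mul_comm] using h1
  · have h1 : ∫ r in b..a, h r ≤ ∫ r in b..a, h b := by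
      apply intervalIntegral.integral_mono_on hab (hcont.intervalIntegrable _ _)
        intervalIntegrable_const
      intro r hr
      exact hanti hb (le_trans hb hr.1) hr.1
    rw [intervalIntegral.integral_symm]
    simp only [intervalIntegral.integral_const, smul_eq_mul] at h1
    nlinarith [h1]

/-- Chain-rule style inequality for an "absolutely continuous" `x` given by an
integral of `w`, and an antitone nonnegative `h`. -/
lemma chain_ineq {x w h : ℝ → ℝ} {T : ℝ} (hT : 0 < T)
    (hw : IntervalIntegrable w volume 0 T)
    (hx : ContinuousOn x (Set.Icc 0 T))
    (hxpos : ∀ t ∈ Set.Icc (0:ℝ) T, 0 ≤ x t)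
    (hxw : ∀ s ∈ Set.Icc (0:ℝ) T, ∀ t ∈ Set.Icc (0:ℝ) T, x t - x s = ∫ r in s..t, w r)
    (hhc : Continuous h) (hanti : AntitoneOn h (Set.Ici 0)) :
    ∫ t in (0:ℝ)..T, h (x t) * w t ≤ ∫ r in (x 0)..(x T), h r := by
  refine le_of_forall_pos_le_add fun ε hε => ?_
  set W : ℝ := ∫ t in (0:ℝ)..T, |w t| with hWdef
  have hW0 : 0 ≤ W := intervalIntegral.integral_nonneg hT.le (fun t _ => abs_nonneg _)
  set ε' : ℝ := ε / (W + 1) with hε'def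
  have hε' : 0 < ε' := div_pos hε (by linarith)
  have hcomp : ContinuousOn (fun t => h (x t)) (Set.Icc 0 T) := hhc.comp_continuousOn hx
  have huc := (isCompact_Icc).uniformContinuousOn_of_continuous hcomp
  rw [Metric.uniformContinuousOn_iff] at huc
  obtain ⟨δ, hδ, hucδ⟩ := huc ε' hε'
  obtain ⟨n, hn⟩ := exists_nat_gt (T / δ)
  have hn0 : 0 < (n:ℝ) := lt_of_le_of_lt (div_nonneg hT.le hδ.le) hn
  have hn' : T < n * δ := by rwa [div_lt_iff₀ hδ] at hn
  have hmesh : T / n < δ := by rw [div_lt_iff₀ hn0]; linarith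
  have hTn : 0 < T / n := div_pos hT hn0
  set p : ℕ → ℝ := fun i => i * (T / n) with hpdef
  have hp0 : p 0 = 0 := by simp [hpdef]
  have hpn : p n = T := by simp only [hpdef]; field_simp
  have hpstep : ∀ i : ℕ, p (i+1) - p i = T / n := by
    intro i; simp only [hpdef]; push_cast; ring
  have hpmono : ∀ i : ℕ, p i ≤ p (i+1) := by
    intro i; have := hpstep i; linarith
  have hpmem : ∀ i : ℕ, i ≤ n → p i ∈ Set.Icc (0:ℝ) T := by
    intro i hi
    refine ⟨by positivity, ?_⟩
    rw [← hpn]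
    exact mul_le_mul_of_nonneg_right (by exact_mod_cast hi) hTn.le
  have hsubint : ∀ i : ℕ, i < n → Set.uIcc (p i) (p (i+1)) ⊆ Set.uIcc (0:ℝ) T := by
    intro i hi
    exact Set.uIcc_subset_uIcc (by rw [Set.uIcc_of_le hT.le]; exact hpmem i hi.le)
      (by rw [Set.uIcc_of_le hT.le]; exact hpmem (i+1) hi)
  have hwsub : ∀ i : ℕ, i < n → IntervalIntegrable w volume (p i) (p (i+1)) :=
    fun i hi => hw.mono_set (hsubint i hi)
  have hIccsub : ∀ i : ℕ, i < n → Set.Icc (p i) (p (i+1)) ⊆ Set.Icc (0:ℝ) T := by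
    intro i hi
    exact Set.Icc_subset_Icc (hpmem i hi.le).1 (hpmem (i+1) hi).2
  have hfi : ∀ i : ℕ, i < n →
      IntervalIntegrable (fun t => h (x t) * w t) volume (p i) (p (i+1)) := by
    intro i hi
    refine (hwsub i hi).continuousOn_mul ?_
    refine hcomp.mono ?_
    rw [Set.uIcc_of_le (hpmono i)]
    exact hIccsub i hi
  have hsum := intervalIntegral.sum_integral_adjacent_intervals (μ := volume) (a := p) hfi
  rw [hp0, hpn] at hsum
  have habs : ∀ i : ℕ, i < n → IntervalIntegrable (fun t => |w t|) volume (p i) (p (i+1)) :=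
    fun i hi => (hwsub i hi).abs
  have habssum := intervalIntegral.sum_integral_adjacent_intervals (μ := volume) (a := p) habs
  rw [hp0, hpn] at habssum
  -- per-interval estimate
  have key : ∀ i : ℕ, i < n →
      ∫ t in p i..p (i+1), h (x t) * w t ≤
        (∫ r in (0:ℝ)..(x (p (i+1))), h r) - (∫ r in (0:ℝ)..(x (p i)), h r)
          + ε' * ∫ t in p i..p (i+1), |w t| := by
    intro i hi
    have hxi : x (p (i+1)) - x (p i) = ∫ r in p i..p (i+1), w r :=
      hxw _ (hpmem i hi.le) _ (hpmem (i+1) hi)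
    have step1 : ∫ t in p i..p (i+1), h (x t) * w t ≤
        h (x (p (i+1))) * (x (p (i+1)) - x (p i))
          + ε' * ∫ t in p i..p (i+1), |w t| := by
      rw [hxi, ← intervalIntegral.integral_const_mul]
      have hsub : IntervalIntegrable (fun t => h (x t) * w t - h (x (p (i+1))) * w t)
          volume (p i) (p (i+1)) := (hfi i hi).sub ((hwsub i hi).const_mul _)
      have h2 : ∫ t in p i..p (i+1), (h (x t) * w t - h (x (p (i+1))) * w t) ≤
          ε' * ∫ t in p i..p (i+1), |w t| := by
        rw [← intervalIntegral.integral_const_mul]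
        calc ∫ t in p i..p (i+1), (h (x t) * w t - h (x (p (i+1))) * w t)
            ≤ |∫ t in p i..p (i+1), (h (x t) * w t - h (x (p (i+1))) * w t)| := le_abs_self _
          _ ≤ ∫ t in p i..p (i+1), |h (x t) * w t - h (x (p (i+1))) * w t| :=
              intervalIntegral.abs_integral_le_integral_abs (hpmono i)
          _ ≤ ∫ t in p i..p (i+1), ε' * |w t| := by
              apply intervalIntegral.integral_mono_on (hpmono i) hsub.abs
                ((habs i hi).const_mul _)
              intro t ht
              rw [← sub_mul, abs_mul]
              apply mul_le_mul_of_nonneg_right _ (abs_nonneg _)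
              have ht' : t ∈ Set.Icc (0:ℝ) T := hIccsub i hi ht
              have hd : dist t (p (i+1)) < δ := by
                rw [Real.dist_eq, abs_sub_lt_iff]
                constructor
                · have := hpstep i; linarith [ht.1, ht.2]
                · have := hpstep i; linarith [ht.1, ht.2]
              have := hucδ t ht' (p (i+1)) (hpmem (i+1) hi) hd
              rw [Real.dist_eq] at this
              exact this.le
      have h3 := intervalIntegral.integral_sub (hfi i hi)
        ((hwsub i hi).const_mul (h (x (p (i+1)))))
      rw [h3] at h2
      linarith
    have step2 : h (x (p (i+1))) * (x (p (i+1)) - x (p i)) ≤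
        (∫ r in (0:ℝ)..(x (p (i+1))), h r) - (∫ r in (0:ℝ)..(x (p i)), h r) := by
      rw [intervalIntegral.integral_interval_sub_left (hhc.intervalIntegrable _ _)
        (hhc.intervalIntegrable _ _)]
      exact grad_ineq hhc hanti (hxpos _ (hpmem i hi.le)) (hxpos _ (hpmem (i+1) hi))
    linarith
  -- sum up
  have total : ∑ i ∈ Finset.range n, ∫ t in p i..p (i+1), h (x t) * w t ≤
      ∑ i ∈ Finset.range n, ((∫ r in (0:ℝ)..(x (p (i+1))), h r)
        - (∫ r in (0:ℝ)..(x (p i)), h r) + ε' * ∫ t in p i..p (i+1), |w t|) := by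
    apply Finset.sum_le_sum
    intro i hi
    exact key i (Finset.mem_range.1 hi)
  rw [hsum] at total
  rw [Finset.sum_add_distrib, Finset.sum_range_sub (fun i => ∫ r in (0:ℝ)..(x (p i)), h r),
    ← Finset.mul_sum, habssum, hp0, hpn] at total
  have hfinal : (∫ r in (0:ℝ)..(x T), h r) - (∫ r in (0:ℝ)..(x 0), h r)
      = ∫ r in (x 0)..(x T), h r :=
    intervalIntegral.integral_interval_sub_left (hhc.intervalIntegrable _ _)
      (hhc.intervalIntegrable _ _)
  rw [hfinal] at total
  have : ε' * W ≤ ε := by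
    rw [hε'def, div_mul_eq_mul_div, div_le_iff₀ (by linarith : (0:ℝ) < W + 1)]
    nlinarith
  linarith

lemma integral_rho_exp (ρ s r : ℝ) :
    ∫ t in s..r, ρ * Real.exp (-ρ*t) = Real.exp (-ρ*s) - Real.exp (-ρ*r) := by
  have h : ∀ t : ℝ, HasDerivAt (fun y => -Real.exp (-ρ*y)) (ρ * Real.exp (-ρ*t)) t := by
    intro t
    have := (((hasDerivAt_id t).const_mul (-ρ)).exp).neg
    have e : -(Real.exp (-ρ * id t) * (-ρ * 1)) = ρ * Real.exp (-ρ*t) := by rw [id_eq, mul_one]; ring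
    rw [e] at this
    exact this
  rw [intervalIntegral.integral_eq_sub_of_hasDerivAt (fun t _ => h t)
    ((continuous_const.mul ((continuous_const.mul continuous_id).rexp)).intervalIntegrable _ _)]
  ring

lemma parts_ineq {x w : ℝ → ℝ} {ρ T : ℝ} (hρ : 0 < ρ) (hT : 0 < T)
    (hw : IntervalIntegrable w volume 0 T)
    (hx : ContinuousOn x (Set.Icc 0 T))
    (hxw : ∀ s ∈ Set.Icc (0:ℝ) T, ∀ t ∈ Set.Icc (0:ℝ) T, x t - x s = ∫ r in s..t, w r) :
    ∫ t in (0:ℝ)..T, (Real.exp (-ρ*t) * w t - ρ * (Real.exp (-ρ*t) * x t)) ≤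
      Real.exp (-ρ*T) * x T - x 0 := by
  refine le_of_forall_pos_le_add fun ε hε => ?_
  set W : ℝ := ∫ t in (0:ℝ)..T, |w t| with hWdef
  have hW0 : 0 ≤ W := intervalIntegral.integral_nonneg hT.le (fun t _ => abs_nonneg _)
  set ε₁ : ℝ := ε / (2 * (W + 1)) with hε₁def
  have hε₁ : 0 < ε₁ := div_pos hε (by linarith)
  set ε₂ : ℝ := ε / 2 with hε₂def
  have hε₂ : 0 < ε₂ := by positivity
  have hqc : ContinuousOn (fun t : ℝ => Real.exp (-ρ*t)) (Set.Icc 0 T) :=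
    ((continuous_const.mul continuous_id).rexp).continuousOn
  have huc1 := (isCompact_Icc).uniformContinuousOn_of_continuous hqc
  have huc2 := (isCompact_Icc).uniformContinuousOn_of_continuous hx
  rw [Metric.uniformContinuousOn_iff] at huc1 huc2
  obtain ⟨δ₁, hδ₁, hucδ₁⟩ := huc1 ε₁ hε₁
  obtain ⟨δ₂, hδ₂, hucδ₂⟩ := huc2 ε₂ hε₂
  set δ := min δ₁ δ₂ with hδdef
  have hδ : 0 < δ := lt_min hδ₁ hδ₂
  obtain ⟨n, hn⟩ := exists_nat_gt (T / δ)
  have hn0 : 0 < (n:ℝ) := lt_of_le_of_lt (div_nonneg hT.le hδ.le) hn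
  have hn' : T < n * δ := by rwa [div_lt_iff₀ hδ] at hn
  have hmesh : T / n < δ := by rw [div_lt_iff₀ hn0]; linarith
  have hTn : 0 < T / n := div_pos hT hn0
  set p : ℕ → ℝ := fun i => i * (T / n) with hpdef
  have hp0 : p 0 = 0 := by simp [hpdef]
  have hpn : p n = T := by simp only [hpdef]; field_simp
  have hpstep : ∀ i : ℕ, p (i+1) - p i = T / n := by
    intro i; simp only [hpdef]; push_cast; ring
  have hpmono : ∀ i : ℕ, p i ≤ p (i+1) := by
    intro i; have := hpstep i; linarith
  have hpmem : ∀ i : ℕ, i ≤ n → p i ∈ Set.Icc (0:ℝ) T := by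
    intro i hi
    refine ⟨by positivity, ?_⟩
    rw [← hpn]
    exact mul_le_mul_of_nonneg_right (by exact_mod_cast hi) hTn.le
  have hsubint : ∀ i : ℕ, i < n → Set.uIcc (p i) (p (i+1)) ⊆ Set.uIcc (0:ℝ) T := by
    intro i hi
    exact Set.uIcc_subset_uIcc (by rw [Set.uIcc_of_le hT.le]; exact hpmem i hi.le)
      (by rw [Set.uIcc_of_le hT.le]; exact hpmem (i+1) hi)
  have hwsub : ∀ i : ℕ, i < n → IntervalIntegrable w volume (p i) (p (i+1)) :=
    fun i hi => hw.mono_set (hsubint i hi)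
  have hIccsub : ∀ i : ℕ, i < n → Set.Icc (p i) (p (i+1)) ⊆ Set.Icc (0:ℝ) T := by
    intro i hi
    exact Set.Icc_subset_Icc (hpmem i hi.le).1 (hpmem (i+1) hi).2
  have hdist : ∀ i : ℕ, i < n → ∀ t ∈ Set.Icc (p i) (p (i+1)),
      dist t (p (i+1)) < δ ∧ dist t (p i) < δ := by
    intro i hi t ht
    have := hpstep i
    constructor
    · rw [Real.dist_eq, abs_sub_lt_iff]; constructor <;> linarith [ht.1, ht.2]
    · rw [Real.dist_eq, abs_sub_lt_iff]; constructor <;> linarith [ht.1, ht.2]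
  -- integrabilities
  have hfa : ∀ i : ℕ, i < n → IntervalIntegrable (fun t => Real.exp (-ρ*t) * w t)
      volume (p i) (p (i+1)) := by
    intro i hi
    exact (hwsub i hi).continuousOn_mul (hqc.mono ((hsubint i hi).trans
      (by rw [Set.uIcc_of_le hT.le])))
  have hxc : ∀ i : ℕ, i < n → ContinuousOn x (Set.uIcc (p i) (p (i+1))) := by
    intro i hi
    refine hx.mono ?_
    rw [Set.uIcc_of_le (hpmono i)]
    exact hIccsub i hi
  have hfb : ∀ i : ℕ, i < n → IntervalIntegrable (fun t => ρ * (Real.exp (-ρ*t) * x t))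
      volume (p i) (p (i+1)) := by
    intro i hi
    apply ContinuousOn.intervalIntegrable
    exact continuousOn_const.mul ((hqc.mono ((hsubint i hi).trans
      (by rw [Set.uIcc_of_le hT.le]))).mul (hxc i hi))
  have hfi : ∀ i : ℕ, i < n → IntervalIntegrable
      (fun t => Real.exp (-ρ*t) * w t - ρ * (Real.exp (-ρ*t) * x t)) volume (p i) (p (i+1)) :=
    fun i hi => (hfa i hi).sub (hfb i hi)
  have hsum := intervalIntegral.sum_integral_adjacent_intervals (μ := volume) (a := p) hfi
  rw [hp0, hpn] at hsum
  have habs : ∀ i : ℕ, i < n → IntervalIntegrable (fun t => |w t|) volume (p i) (p (i+1)) :=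
    fun i hi => (hwsub i hi).abs
  have habssum := intervalIntegral.sum_integral_adjacent_intervals (μ := volume) (a := p) habs
  rw [hp0, hpn] at habssum
  -- per-interval estimate
  have key : ∀ i : ℕ, i < n →
      ∫ t in p i..p (i+1), (Real.exp (-ρ*t) * w t - ρ * (Real.exp (-ρ*t) * x t)) ≤
        (Real.exp (-ρ*p (i+1)) * x (p (i+1)) - Real.exp (-ρ*p i) * x (p i))
          + ε₁ * (∫ t in p i..p (i+1), |w t|)
          + ε₂ * (Real.exp (-ρ*p i) - Real.exp (-ρ*p (i+1))) := by
    intro i hi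
    have hxi : x (p (i+1)) - x (p i) = ∫ r in p i..p (i+1), w r :=
      hxw _ (hpmem i hi.le) _ (hpmem (i+1) hi)
    rw [intervalIntegral.integral_sub (hfa i hi) (hfb i hi)]
    -- part A
    have hA : ∫ t in p i..p (i+1), Real.exp (-ρ*t) * w t ≤
        Real.exp (-ρ*p (i+1)) * (x (p (i+1)) - x (p i))
          + ε₁ * ∫ t in p i..p (i+1), |w t| := by
      rw [hxi, ← intervalIntegral.integral_const_mul]
      have hsub : IntervalIntegrable
          (fun t => Real.exp (-ρ*t) * w t - Real.exp (-ρ*p (i+1)) * w t)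
          volume (p i) (p (i+1)) := (hfa i hi).sub ((hwsub i hi).const_mul _)
      have h2 : ∫ t in p i..p (i+1),
          (Real.exp (-ρ*t) * w t - Real.exp (-ρ*p (i+1)) * w t) ≤
          ε₁ * ∫ t in p i..p (i+1), |w t| := by
        rw [← intervalIntegral.integral_const_mul]
        calc ∫ t in p i..p (i+1), (Real.exp (-ρ*t) * w t - Real.exp (-ρ*p (i+1)) * w t)
            ≤ |∫ t in p i..p (i+1), (Real.exp (-ρ*t) * w t - Real.exp (-ρ*p (i+1)) * w t)| :=
              le_abs_self _
          _ ≤ ∫ t in p i..p (i+1), |Real.exp (-ρ*t) * w t - Real.exp (-ρ*p (i+1)) * w t| :=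
              intervalIntegral.abs_integral_le_integral_abs (hpmono i)
          _ ≤ ∫ t in p i..p (i+1), ε₁ * |w t| := by
              apply intervalIntegral.integral_mono_on (hpmono i) hsub.abs
                ((habs i hi).const_mul _)
              intro t ht
              rw [← sub_mul, abs_mul]
              apply mul_le_mul_of_nonneg_right _ (abs_nonneg _)
              have ht' : t ∈ Set.Icc (0:ℝ) T := hIccsub i hi ht
              have hd := (hdist i hi t ht).1
              have := hucδ₁ t ht' (p (i+1)) (hpmem (i+1) hi) (lt_of_lt_of_le hd (min_le_left _ _))
              rw [Real.dist_eq] at this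
              exact this.le
      have h3 := intervalIntegral.integral_sub (hfa i hi)
        ((hwsub i hi).const_mul (Real.exp (-ρ*p (i+1))))
      rw [h3] at h2
      linarith
    -- part B
    have hB : (x (p i) - ε₂) * (Real.exp (-ρ*p i) - Real.exp (-ρ*p (i+1))) ≤
        ∫ t in p i..p (i+1), ρ * (Real.exp (-ρ*t) * x t) := by
      have hcont5 : Continuous (fun t : ℝ => (x (p i) - ε₂) * (ρ * Real.exp (-ρ*t))) := by
        fun_prop
      have h4 : ∫ t in p i..p (i+1), (x (p i) - ε₂) * (ρ * Real.exp (-ρ*t)) ≤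
          ∫ t in p i..p (i+1), ρ * (Real.exp (-ρ*t) * x t) := by
        apply intervalIntegral.integral_mono_on (hpmono i)
          (hcont5.intervalIntegrable _ _) (hfb i hi)
        intro t ht
        have ht' : t ∈ Set.Icc (0:ℝ) T := hIccsub i hi ht
        have hd := (hdist i hi t ht).2
        have := hucδ₂ t ht' (p i) (hpmem i hi.le) (lt_of_lt_of_le hd (min_le_right _ _))
        rw [Real.dist_eq] at this
        have hxlb : x (p i) - ε₂ ≤ x t := by
          have := abs_sub_lt_iff.1 this
          linarith [this.1, this.2]
        have hexp : (0:ℝ) < Real.exp (-ρ*t) := Real.exp_pos _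
        nlinarith [mul_nonneg (mul_pos hρ hexp).le (sub_nonneg.2 hxlb)]
      rw [intervalIntegral.integral_const_mul, integral_rho_exp] at h4
      exact h4
    have hexpand : Real.exp (-ρ*p (i+1)) * (x (p (i+1)) - x (p i))
        - (x (p i) - ε₂) * (Real.exp (-ρ*p i) - Real.exp (-ρ*p (i+1)))
        = (Real.exp (-ρ*p (i+1)) * x (p (i+1)) - Real.exp (-ρ*p i) * x (p i))
          + ε₂ * (Real.exp (-ρ*p i) - Real.exp (-ρ*p (i+1))) := by ring
    linarith
  -- sum up
  have total : ∑ i ∈ Finset.range n,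
      (∫ t in p i..p (i+1), (Real.exp (-ρ*t) * w t - ρ * (Real.exp (-ρ*t) * x t))) ≤
      ∑ i ∈ Finset.range n,
        ((Real.exp (-ρ*p (i+1)) * x (p (i+1)) - Real.exp (-ρ*p i) * x (p i))
          + (ε₁ * (∫ t in p i..p (i+1), |w t|)
          + ε₂ * (Real.exp (-ρ*p i) - Real.exp (-ρ*p (i+1))))) := by
    apply Finset.sum_le_sum
    intro i hi
    have := key i (Finset.mem_range.1 hi)
    linarith
  rw [hsum] at total
  rw [Finset.sum_add_distrib, Finset.sum_range_sub
    (fun i => Real.exp (-ρ*p i) * x (p i)), Finset.sum_add_distrib, ← Finset.mul_sum,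
    habssum] at total
  have htel2 : ∑ i ∈ Finset.range n, ε₂ * (Real.exp (-ρ*p i) - Real.exp (-ρ*p (i+1)))
      = ε₂ * (Real.exp (-ρ*p 0) - Real.exp (-ρ*p n)) := by
    rw [← Finset.mul_sum]
    congr 1
    exact Finset.sum_range_sub' (fun i => Real.exp (-ρ*p i)) n
  rw [htel2, hp0, hpn] at total
  have he1 : Real.exp (-ρ*(0:ℝ)) = 1 := by norm_num
  rw [he1] at total
  have hb1 : ε₁ * W ≤ ε / 2 := by
    rw [hε₁def, div_mul_eq_mul_div, div_le_iff₀ (by linarith : (0:ℝ) < 2*(W + 1))]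
    nlinarith
  have hb2 : ε₂ * (1 - Real.exp (-ρ*T)) ≤ ε / 2 := by
    have h5 : (0:ℝ) < Real.exp (-ρ*T) := Real.exp_pos _
    rw [hε₂def]
    nlinarith
  linarith

lemma traj_nonneg {F u x : ℝ → ℝ} {x₀ : ℝ} (hx₀ : 0 ≤ x₀)
    (hFanti : Antitone F) (hF0 : F 0 = 0)
    (hxcont : ContinuousOn x (Set.Ici 0))
    (hxeq : ∀ t : ℝ, 0 ≤ t → x t = x₀ + ∫ s in (0:ℝ)..t, (F (x s) + u s))
    (hwint : ∀ T : ℝ, 0 < T → IntervalIntegrable (fun s => F (x s) + u s) volume 0 T)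
    (hupos : ∀ᵐ t ∂(volume.restrict (Set.Ici (0:ℝ))), 0 < u t) :
    ∀ t : ℝ, 0 ≤ t → 0 ≤ x t := by
  have hx0 : x 0 = x₀ := by
    have := hxeq 0 le_rfl
    simpa using this
  intro t₁ ht₁
  by_contra hneg
  push_neg at hneg
  have ht₁pos : 0 < t₁ := by
    rcases lt_or_eq_of_le ht₁ with h | h
    · exact h
    · exfalso; rw [← h, hx0] at hneg; linarith
  set S : Set ℝ := Set.Icc 0 t₁ ∩ x ⁻¹' Set.Ici 0 with hSdef
  have hclosed : IsClosed S :=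
    (hxcont.mono (Set.Icc_subset_Ici_self)).preimage_isClosed_of_isClosed
      isClosed_Icc isClosed_Ici
  have hcomp : IsCompact S :=
    isCompact_Icc.of_isClosed_subset hclosed Set.inter_subset_left
  have hne : S.Nonempty := ⟨0, ⟨le_rfl, ht₁⟩, by rw [Set.mem_preimage, hx0]; exact hx₀⟩
  set t' : ℝ := sSup S with ht'def
  have ht'S : t' ∈ S := hcomp.sSup_mem hne
  have ht'0 : 0 ≤ t' := ht'S.1.1
  have ht'le : t' ≤ t₁ := ht'S.1.2
  have hxt' : 0 ≤ x t' := ht'S.2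
  have ht'ne : t' ≠ t₁ := by
    intro h
    rw [h] at hxt'
    linarith
  have ht'lt : t' < t₁ := lt_of_le_of_ne ht'le ht'ne
  have hbetween : ∀ s : ℝ, t' < s → s ≤ t₁ → x s < 0 := by
    intro s hs1 hs2
    by_contra hxs
    push_neg at hxs
    have hsS : s ∈ S := ⟨⟨le_trans ht'0 hs1.le, hs2⟩, hxs⟩
    have := le_csSup hcomp.bddAbove hsS
    linarith
  have hxt'0 : x t' = 0 := by
    refine le_antisymm ?_ hxt'
    have htend : Filter.Tendsto x (nhdsWithin t' (Set.Ioc t' t₁)) (nhds (x t')) := by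
      apply Filter.Tendsto.mono_left ((hxcont t' ht'0).tendsto)
      apply nhdsWithin_mono
      intro s hs
      exact le_trans ht'0 hs.1.le
    have hev : ∀ᶠ s in nhdsWithin t' (Set.Ioc t' t₁), x s ≤ 0 := by
      filter_upwards [self_mem_nhdsWithin] with s hs
      exact (hbetween s hs.1 hs.2).le
    haveI : (nhdsWithin t' (Set.Ioc t' t₁)).NeBot := left_nhdsWithin_Ioc_neBot ht'lt
    exact le_of_tendsto htend hev
  -- now integral inequality
  have hint1 : IntervalIntegrable (fun s => F (x s) + u s) volume 0 t₁ := hwint t₁ ht₁pos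
  have hint2 : IntervalIntegrable (fun s => F (x s) + u s) volume 0 t' :=
    hint1.mono_set (by rw [Set.uIcc_of_le ht₁, Set.uIcc_of_le ht'0]; exact Set.Icc_subset_Icc le_rfl ht'le)
  have hdiff : x t₁ - x t' = ∫ s in t'..t₁, (F (x s) + u s) := by
    rw [hxeq t₁ ht₁, hxeq t' ht'0]
    rw [add_sub_add_left_eq_sub]
    exact intervalIntegral.integral_interval_sub_left hint1 hint2
  have hpos : 0 ≤ ∫ s in t'..t₁, (F (x s) + u s) := by
    apply intervalIntegral.integral_nonneg_of_ae_restrict ht'lt.le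
    have hmono := ae_restrict_of_ae_restrict_of_subset
      (Set.Icc_subset_Ici_self.trans (Set.Ici_subset_Ici.2 ht'0) :
        Set.Icc t' t₁ ⊆ Set.Ici 0) hupos
    filter_upwards [hmono, ae_restrict_mem measurableSet_Icc] with s hus hsmem
    have hxs : x s ≤ 0 := by
      rcases lt_or_eq_of_le hsmem.1 with h | h
      · exact (hbetween s h hsmem.2).le
      · rw [← h, hxt'0]
    have hFs : 0 ≤ F (x s) := by
      rw [← hF0]
      exact hFanti hxs
    simp only [Pi.zero_apply]
    linarith
  rw [hxt'0] at hdiff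
  linarith

lemma gauss_anti {c : ℝ} (hc : 0 < c) :
    AntitoneOn (fun y => Real.exp (-(c*y^2)/4)) (Set.Ici 0) := by
  intro a ha b hb hab
  simp only
  apply Real.exp_le_exp.2
  have : a^2 ≤ b^2 := by
    have ha' : (0:ℝ) ≤ a := ha
    nlinarith
  nlinarith

lemma gauss_le_one {c : ℝ} (hc : 0 < c) (y : ℝ) : Real.exp (-(c*y^2)/4) ≤ 1 := by
  rw [Real.exp_le_one_iff]
  nlinarith [sq_nonneg y]

lemma gauss_recip {c : ℝ} (hc : 0 < c) (y : ℝ) :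
    Real.exp (-(c*y^2)/4) ≤ 1 / (1 + c*y^2/4) := by
  have h2 : 1 + c*y^2/4 ≤ Real.exp (c*y^2/4) := by
    have := Real.add_one_le_exp (c*y^2/4)
    linarith
  have h4 : (0:ℝ) < 1 + c*y^2/4 := by nlinarith [sq_nonneg y]
  have h5 : 1 / Real.exp (c*y^2/4) ≤ 1 / (1 + c*y^2/4) :=
    one_div_le_one_div_of_le h4 h2
  have h3 : Real.exp (-(c*y^2)/4) = 1 / Real.exp (c*y^2/4) := by
    rw [one_div, ← Real.exp_neg]; ring_nf
  rw [h3]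
  exact h5

lemma mul_gauss_le {c : ℝ} (hc : 0 < c) {y : ℝ} (hy : 0 ≤ y) :
    y * Real.exp (-(c*y^2)/4) ≤ 1 / Real.sqrt c := by
  have h1 := gauss_recip hc y
  have h4 : (0:ℝ) < 1 + c*y^2/4 := by nlinarith [sq_nonneg y]
  have hs0 : 0 < Real.sqrt c := Real.sqrt_pos.2 hc
  have hsq : Real.sqrt c * Real.sqrt c = c := Real.mul_self_sqrt hc.le
  have h5 : y * Real.exp (-(c*y^2)/4) ≤ y / (1 + c*y^2/4) := by
    rw [div_eq_mul_one_div y]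
    exact mul_le_mul_of_nonneg_left h1 hy
  refine h5.trans ?_
  rw [div_le_div_iff₀ h4 hs0]
  nlinarith [sq_nonneg (Real.sqrt c * y - 2)]

lemma gauss_primitive_le {c : ℝ} (hc : 0 < c) {y : ℝ} (hy : 0 ≤ y) :
    ∫ r in (0:ℝ)..y, Real.exp (-(c*r^2)/4) ≤ 4 / Real.sqrt c := by
  have hs0 : 0 < Real.sqrt c := Real.sqrt_pos.2 hc
  have hsq : Real.sqrt c * Real.sqrt c = c := Real.mul_self_sqrt hc.le
  set m : ℝ := 2 / Real.sqrt c with hmdef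
  have hm0 : 0 < m := by positivity
  have hcont : Continuous (fun r : ℝ => Real.exp (-(c*r^2)/4)) := by fun_prop
  have hbelow : ∀ z : ℝ, 0 ≤ z → z ≤ m → ∫ r in (0:ℝ)..z, Real.exp (-(c*r^2)/4) ≤ m := by
    intro z hz hzm
    have : ∫ r in (0:ℝ)..z, Real.exp (-(c*r^2)/4) ≤ ∫ r in (0:ℝ)..z, (1:ℝ) := by
      apply intervalIntegral.integral_mono_on hz (hcont.intervalIntegrable _ _)
        intervalIntegrable_const
      intro r _
      exact gauss_le_one hc r
    simpa using this.trans (by simpa using hzm)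
  rcases le_total y m with hym | hmy
  · have := hbelow y hy hym
    refine this.trans ?_
    rw [hmdef, div_le_div_iff₀ hs0 hs0]
    nlinarith
  · have hsplit : ∫ r in (0:ℝ)..y, Real.exp (-(c*r^2)/4)
        = (∫ r in (0:ℝ)..m, Real.exp (-(c*r^2)/4)) + ∫ r in m..y, Real.exp (-(c*r^2)/4) :=
      (intervalIntegral.integral_add_adjacent_intervals (hcont.intervalIntegrable _ _)
        (hcont.intervalIntegrable _ _)).symm
    have h1 : ∫ r in (0:ℝ)..m, Real.exp (-(c*r^2)/4) ≤ m := hbelow m hm0.le le_rfl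
    have h2 : ∫ r in m..y, Real.exp (-(c*r^2)/4) ≤ ∫ r in m..y, 4/(c*r^2) := by
      apply intervalIntegral.integral_mono_on hmy (hcont.intervalIntegrable _ _)
      · apply ContinuousOn.intervalIntegrable
        apply ContinuousOn.div continuousOn_const (by fun_prop)
        intro r hr
        rw [Set.uIcc_of_le hmy] at hr
        have : 0 < r := lt_of_lt_of_le hm0 hr.1
        positivity
      · intro r hr
        have hrm : m ≤ r := hr.1
        have hr0 : 0 < r := lt_of_lt_of_le hm0 hrm
        have := gauss_recip hc r
        refine this.trans ?_
        have hp1 : (0:ℝ) < 1 + c*r^2/4 := by positivity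
        have hp2 : (0:ℝ) < c*r^2 := by positivity
        rw [div_le_div_iff₀ hp1 hp2]
        nlinarith
    have h3 : ∫ r in m..y, 4/(c*r^2) = 4/(c*m) - 4/(c*y) := by
      have hder : ∀ r ∈ Set.uIcc m y, HasDerivAt (fun s => -(4/(c*s))) (4/(c*r^2)) r := by
        intro r hr
        rw [Set.uIcc_of_le hmy] at hr
        have hr0 : 0 < r := lt_of_lt_of_le hm0 hr.1
        have hd : HasDerivAt (fun s : ℝ => s⁻¹) (-(r^2)⁻¹) r := hasDerivAt_inv hr0.ne'
        have hd2 := hd.const_mul (-(4/c))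
        have heq : (fun s : ℝ => -(4/(c*s))) = fun s : ℝ => -(4/c) * s⁻¹ := by
          funext s
          field_simp
        rw [heq]
        exact hd2.congr_deriv (by ring)
      rw [intervalIntegral.integral_eq_sub_of_hasDerivAt hder]
      · ring
      · apply ContinuousOn.intervalIntegrable
        apply ContinuousOn.div continuousOn_const (by fun_prop)
        intro r hr
        rw [Set.uIcc_of_le hmy] at hr
        have : 0 < r := lt_of_lt_of_le hm0 hr.1
        positivity
    have h4 : 4/(c*m) - 4/(c*y) ≤ 4/(c*m) := by
      have hy0 : 0 < y := lt_of_lt_of_le hm0 hmy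
      have : 0 < 4/(c*y) := by positivity
      linarith
    have h5 : 4/(c*m) = m := by
      rw [hmdef]
      field_simp
      nlinarith
    have h6 : m + m ≤ 4 / Real.sqrt c := by
      rw [hmdef]; ring_nf; linarith
    rw [hsplit]
    have hy0 : 0 < y := lt_of_lt_of_le hm0 hmy
    have h7 : 0 < 4/(c*y) := by positivity
    calc _ ≤ m + (4/(c*m) - 4/(c*y)) := by linarith
      _ ≤ m + m := by linarith [h5]
      _ ≤ _ := h6
/-- A control `u` is admissible: measurable, locally integrable on `[0,∞)`,
and positive almost everywhere on `[0,∞)`. -/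
def Admissible (u : ℝ → ℝ) : Prop :=
  Measurable u ∧ (∀ T : ℝ, 0 < T → IntegrableOn u (Set.Icc 0 T)) ∧
    (∀ᵐ t ∂(volume.restrict (Set.Ici (0:ℝ))), 0 < u t)

/-- `x` is a trajectory associated with the control `u`, dynamics `F` and
initial state `x₀`. -/
def Trajectory (F : ℝ → ℝ) (x₀ : ℝ) (u x : ℝ → ℝ) : Prop :=
  ContinuousOn x (Set.Ici 0) ∧
    ∀ t : ℝ, 0 ≤ t → x t = x₀ + ∫ s in (0:ℝ)..t, (F (x s) + u s)

/-- The objective functional `B(u,x) = ∫₀^∞ e^{-ρt}(log u(t) - c x(t)²) dt`. -/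
noncomputable def objective (ρ c : ℝ) (u x : ℝ → ℝ) : ℝ :=
  ∫ t in Set.Ioi (0:ℝ), Real.exp (-ρ * t) * (Real.log (u t) - c * (x t) ^ 2)

/-- Integrability of the integrand of the objective functional. -/
def ObjIntegrable (ρ c : ℝ) (u x : ℝ → ℝ) : Prop :=
  IntegrableOn (fun t => Real.exp (-ρ * t) * (Real.log (u t) - c * (x t) ^ 2))
    (Set.Ioi (0:ℝ))

set_option maxHeartbeats 2000000 in
theorem value_function_bounded
    (ρ c x₀ b₀ : ℝ) (F : ℝ → ℝ)
    (hρ : 0 < ρ) (hc : 0 < c) (hx₀ : 0 ≤ x₀) (hb₀ : 0 < b₀)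
    (hF : ContDiff ℝ 1 F) (hF0 : F 0 = 0)
    (hF' : ∀ y : ℝ, -b₀ ≤ deriv F y ∧ deriv F y ≤ 0) :
    ∀ u x : ℝ → ℝ, Admissible u → Trajectory F x₀ u x → ObjIntegrable ρ c u x →
      objective ρ c u x ≤ (1 / ρ) * Real.log ((ρ + b₀) / Real.sqrt (2 * Real.exp 1 * c)) := by
  intro u x hu hx hint
  obtain ⟨humeas, huloc, hupos⟩ := hu
  obtain ⟨hxcont, hxeq⟩ := hx
  have hae : ∀ᵐ t ∂(volume : Measure ℝ), t ∈ Set.Ici (0:ℝ) → 0 < u t :=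
    (ae_restrict_iff' measurableSet_Ici).1 hupos
  -- facts about F
  have hFdiff : Differentiable ℝ F := hF.differentiable one_ne_zero
  have hFanti : Antitone F := antitone_of_deriv_nonpos hFdiff (fun y => (hF' y).2)
  have hFlb : ∀ y : ℝ, 0 ≤ y → -(b₀*y) ≤ F y := by
    intro y hy
    have hmono : Monotone (fun z => F z + b₀ * z) := by
      apply monotone_of_deriv_nonneg
      · exact hFdiff.add (by fun_prop)
      · intro z
        have hd : HasDerivAt (fun z => F z + b₀ * z) (deriv F z + b₀) z := by
          exact ((hFdiff z).hasDerivAt).add (by simpa using (hasDerivAt_id z).const_mul b₀)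
        rw [hd.deriv]
        linarith [(hF' z).1]
    have := hmono hy
    simp only [hF0] at this
    linarith [this]
  -- the drift term
  set w : ℝ → ℝ := fun s => F (x s) + u s with hwdef
  have hFxc : ContinuousOn (fun s => F (x s)) (Set.Ici 0) :=
    hF.continuous.comp_continuousOn hxcont
  have huT : ∀ T : ℝ, 0 < T → IntervalIntegrable u volume 0 T := by
    intro T hT
    rw [intervalIntegrable_iff_integrableOn_Icc_of_le hT.le]
    exact huloc T hT
  have hwT : ∀ T : ℝ, 0 < T → IntervalIntegrable w volume 0 T := by
    intro T hT
    rw [intervalIntegrable_iff_integrableOn_Icc_of_le hT.le]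
    exact (((hFxc.mono Set.Icc_subset_Ici_self).integrableOn_compact isCompact_Icc)).add
      (huloc T hT)
  have hxnn : ∀ t : ℝ, 0 ≤ t → 0 ≤ x t :=
    traj_nonneg hx₀ hFanti hF0 hxcont hxeq hwT hupos
  have hx0 : x 0 = x₀ := by simpa using hxeq 0 le_rfl
  have hxw : ∀ T : ℝ, 0 < T → ∀ s ∈ Set.Icc (0:ℝ) T, ∀ t ∈ Set.Icc (0:ℝ) T,
      x t - x s = ∫ r in s..t, w r := by
    intro T hT s hs t ht
    have h1 : IntervalIntegrable w volume 0 t := (hwT T hT).mono_set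
      (by rw [Set.uIcc_of_le hT.le, Set.uIcc_of_le ht.1]; exact Set.Icc_subset_Icc le_rfl ht.2)
    have h2 : IntervalIntegrable w volume 0 s := (hwT T hT).mono_set
      (by rw [Set.uIcc_of_le hT.le, Set.uIcc_of_le hs.1]; exact Set.Icc_subset_Icc le_rfl hs.2)
    rw [hxeq t ht.1, hxeq s hs.1, add_sub_add_left_eq_sub]
    exact intervalIntegral.integral_interval_sub_left h1 h2
  have hule : ∀ t : ℝ, 0 ≤ t → u t ≤ w t + b₀ * x t := by
    intro t ht
    have := hFlb (x t) (hxnn t ht)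
    simp only [hwdef]
    linarith
  have hwleu : ∀ t : ℝ, 0 ≤ t → w t ≤ u t := by
    intro t ht
    have h1 : F (x t) ≤ 0 := by
      rw [← hF0]
      exact hFanti (hxnn t ht)
    simp only [hwdef]
    linarith
  -- the Gaussian weight
  set h : ℝ → ℝ := fun y => Real.exp (-(c*y^2)/4) with hhdef
  have hhc : Continuous h := by fun_prop
  have hhpos : ∀ y, 0 < h y := fun y => Real.exp_pos _
  have hhxc : ContinuousOn (fun t => h (x t)) (Set.Ici 0) := hhc.comp_continuousOn hxcont
  set g0 : ℝ → ℝ := fun t => Real.exp (-ρ * t) * (Real.log (u t) - c * (x t) ^ 2) with hg0def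
  -- Step: chain rule bound
  have hchainT : ∀ T : ℝ, 0 < T → ∫ t in (0:ℝ)..T, h (x t) * w t ≤ 4 / Real.sqrt c := by
    intro T hT
    have hstep := chain_ineq hT (hwT T hT) (hxcont.mono Set.Icc_subset_Ici_self)
      (fun t ht => hxnn t ht.1) (hxw T hT) hhc (gauss_anti hc)
    refine hstep.trans ?_
    rw [← intervalIntegral.integral_interval_sub_left (hhc.intervalIntegrable _ _)
      (hhc.intervalIntegrable _ _)]
    have hb1 : ∫ r in (0:ℝ)..(x T), h r ≤ 4 / Real.sqrt c :=
      gauss_primitive_le hc (hxnn T hT.le)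
    have hb2 : 0 ≤ ∫ r in (0:ℝ)..(x 0), h r := by
      apply intervalIntegral.integral_nonneg (by rw [hx0]; exact hx₀)
      intro r _
      exact (hhpos r).le
    linarith
  -- bound for the auxiliary integrand
  have hvT : ∀ T : ℝ, 0 < T →
      IntervalIntegrable (fun t => h (x t) * |u t|) volume 0 T := by
    intro T hT
    refine ((huT T hT).abs).continuousOn_mul ?_
    rw [Set.uIcc_of_le hT.le]
    exact hhxc.mono Set.Icc_subset_Ici_self
  have huvT : ∀ T : ℝ, 0 < T →
      IntervalIntegrable (fun t => h (x t) * u t) volume 0 T := by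
    intro T hT
    refine (huT T hT).continuousOn_mul ?_
    rw [Set.uIcc_of_le hT.le]
    exact hhxc.mono Set.Icc_subset_Ici_self
  have hhwT : ∀ T : ℝ, 0 < T →
      IntervalIntegrable (fun t => h (x t) * w t) volume 0 T := by
    intro T hT
    refine (hwT T hT).continuousOn_mul ?_
    rw [Set.uIcc_of_le hT.le]
    exact hhxc.mono Set.Icc_subset_Ici_self
  have hvbound : ∀ T : ℝ, 0 < T →
      ∫ t in (0:ℝ)..T, h (x t) * |u t| ≤ 4/Real.sqrt c + (b₀/Real.sqrt c) * T := by
    intro T hT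
    have hcongr : ∫ t in (0:ℝ)..T, h (x t) * |u t| = ∫ t in (0:ℝ)..T, h (x t) * u t := by
      apply intervalIntegral.integral_congr_ae
      filter_upwards [hae] with t hut htmem
      have ht0 : 0 ≤ t := by
        rw [Set.uIoc_of_le hT.le] at htmem
        exact htmem.1.le
      rw [abs_of_pos (hut ht0)]
    rw [hcongr]
    have hmono : ∫ t in (0:ℝ)..T, h (x t) * u t ≤
        ∫ t in (0:ℝ)..T, (h (x t) * w t + b₀ * (1/Real.sqrt c)) := by
      apply intervalIntegral.integral_mono_on hT.le (huvT T hT)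
        ((hhwT T hT).add intervalIntegrable_const)
      intro t ht
      have ht0 : 0 ≤ t := ht.1
      have h1 := hule t ht0
      have h2 : 0 ≤ h (x t) := (hhpos _).le
      have h3 : h (x t) * u t ≤ h (x t) * w t + b₀ * (x t * h (x t)) := by
        have := mul_le_mul_of_nonneg_left h1 h2
        nlinarith [this]
      have h4 : x t * h (x t) ≤ 1/Real.sqrt c := mul_gauss_le hc (hxnn t ht0)
      have h5 : b₀ * (x t * h (x t)) ≤ b₀ * (1/Real.sqrt c) :=
        mul_le_mul_of_nonneg_left h4 hb₀.le
      exact h3.trans (add_le_add le_rfl h5)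
    refine hmono.trans ?_
    rw [intervalIntegral.integral_add (hhwT T hT) intervalIntegrable_const,
      intervalIntegral.integral_const]
    have := hchainT T hT
    have hsm : (T - 0) • (b₀ * (1/Real.sqrt c)) = (b₀/Real.sqrt c) * T := by
      rw [smul_eq_mul]; ring
    rw [hsm]
    linarith
  -- summability of the tail bound
  set C₁ : ℝ := 4/Real.sqrt c with hC₁def
  set C₂ : ℝ := b₀/Real.sqrt c with hC₂def
  have hC₁0 : 0 ≤ C₁ := by positivity
  have hC₂0 : 0 ≤ C₂ := by positivity
  set r : ℝ := Real.exp (-ρ) with hrdef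
  have hr0 : 0 < r := Real.exp_pos _
  have hr1 : r < 1 := by
    rw [hrdef, Real.exp_lt_one_iff]
    linarith
  have hpow : ∀ k : ℕ, Real.exp (-ρ*k) = r^k := by
    intro k
    rw [hrdef, ← Real.exp_nat_mul]
    ring_nf
  have hterm : ∀ k : ℕ, Real.exp (-ρ*k) * (C₁ + C₂ * ((k:ℝ)+1))
      = (C₁ + C₂) * r^k + C₂ * ((k:ℝ) * r^k) := by
    intro k
    rw [hpow k]
    ring
  have hsummable : Summable (fun k : ℕ => Real.exp (-ρ*k) * (C₁ + C₂ * ((k:ℝ)+1))) := by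
    have hs1 : Summable (fun k : ℕ => (k:ℝ) * r^k) := by
      have := summable_pow_mul_geometric_of_norm_lt_one 1
        (by rw [Real.norm_eq_abs, abs_of_pos hr0]; exact hr1 : ‖r‖ < 1)
      simpa using this
    have hs2 : Summable (fun k : ℕ => r^k) := summable_geometric_of_lt_one hr0.le hr1
    have := (hs2.mul_left (C₁ + C₂)).add (hs1.mul_left C₂)
    apply this.congr
    intro k
    rw [hterm k]
  set S : ℝ := ∑' k : ℕ, Real.exp (-ρ*k) * (C₁ + C₂ * ((k:ℝ)+1)) with hSdef
  have htermnn : ∀ k : ℕ, 0 ≤ Real.exp (-ρ*k) * (C₁ + C₂ * ((k:ℝ)+1)) := by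
    intro k
    have : (0:ℝ) ≤ C₁ + C₂ * ((k:ℝ)+1) := by positivity
    positivity
  -- the tail-decay integrand
  set f₁ : ℝ → ℝ := fun t => Real.exp (-ρ*t) * (h (x t) * u t) with hf₁def
  have hf₁norm : ∀ t : ℝ, ‖f₁ t‖ = Real.exp (-ρ*t) * (h (x t) * |u t|) := by
    intro t
    rw [Real.norm_eq_abs, abs_mul, abs_mul, abs_of_pos (Real.exp_pos _),
      abs_of_pos (hhpos _)]
  have hvnn : ∀ t : ℝ, 0 ≤ h (x t) * |u t| := fun t =>
    mul_nonneg (hhpos _).le (abs_nonneg _)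
  -- interval integral of ‖f₁‖ bounded by S
  have hnormbound : ∀ n : ℕ, ∫ t in (0:ℝ)..(n:ℝ), ‖f₁ t‖ ≤ S := by
    intro n
    have hfun : (fun t => ‖f₁ t‖) = fun t => Real.exp (-ρ*t) * (h (x t) * |u t|) :=
      funext hf₁norm
    rw [hfun]
    rcases Nat.eq_zero_or_pos n with hn | hn
    · subst hn
      simp only [Nat.cast_zero, intervalIntegral.integral_same]
      exact tsum_nonneg htermnn
    · have hn0 : (0:ℝ) < (n:ℝ) := by exact_mod_cast hn
      -- integrability on pieces
      have hpiece : ∀ k : ℕ, k < n → IntervalIntegrable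
          (fun t => Real.exp (-ρ*t) * (h (x t) * |u t|)) volume (k:ℝ) ((k:ℝ)+1) := by
        intro k hk
        have hsub : Set.uIcc ((k:ℝ)) ((k:ℝ)+1) ⊆ Set.uIcc (0:ℝ) (n:ℝ) := by
          rw [Set.uIcc_of_le (by linarith : (k:ℝ) ≤ (k:ℝ)+1), Set.uIcc_of_le hn0.le]
          apply Set.Icc_subset_Icc (by positivity)
          have : (k:ℝ)+1 ≤ (n:ℝ) := by exact_mod_cast hk
          exact this
        have hbase : IntervalIntegrable (fun t => h (x t) * |u t|) volume (k:ℝ) ((k:ℝ)+1) :=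
          (hvT n hn0).mono_set hsub
        have heq : (fun t => Real.exp (-ρ*t) * (h (x t) * |u t|))
            = fun t => (h (x t) * |u t|) * Real.exp (-ρ*t) := by
          funext t; ring
        rw [heq]
        exact hbase.mul_continuousOn (by fun_prop)
      have hpiece2 : ∀ k : ℕ, (k:ℝ) ≤ ((k:ℝ)+1) := fun k => by linarith
      have hcast : ∀ k : ℕ, ((k+1 : ℕ):ℝ) = (k:ℝ)+1 := fun k => by push_cast; ring
      have hsplit := intervalIntegral.sum_integral_adjacent_intervals
        (μ := volume) (a := fun k : ℕ => (k:ℝ)) (n := n) (by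
          intro k hk
          have := hpiece k hk
          rwa [← hcast k] at this)
      simp only [Nat.cast_zero] at hsplit
      rw [← hsplit]
      -- bound each piece
      have hpiecebound : ∀ k : ℕ, k < n →
          ∫ t in ((k:ℕ):ℝ)..((k+1:ℕ):ℝ), Real.exp (-ρ*t) * (h (x t) * |u t|)
            ≤ Real.exp (-ρ*k) * (C₁ + C₂ * ((k:ℝ)+1)) := by
        intro k hk
        rw [hcast k]
        have hb1 : ∫ t in ((k:ℕ):ℝ)..((k:ℝ)+1), Real.exp (-ρ*t) * (h (x t) * |u t|)
            ≤ ∫ t in ((k:ℕ):ℝ)..((k:ℝ)+1), Real.exp (-ρ*k) * (h (x t) * |u t|) := by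
          apply intervalIntegral.integral_mono_on (hpiece2 k) (hcast k ▸ hpiece k hk)
            (((hvT n (by exact_mod_cast hn)).mono_set (by
              rw [Set.uIcc_of_le (hpiece2 k), Set.uIcc_of_le (by positivity : (0:ℝ) ≤ (n:ℝ))]
              apply Set.Icc_subset_Icc (by positivity)
              have : (k:ℝ)+1 ≤ (n:ℝ) := by exact_mod_cast hk
              exact this)).const_mul _)
          intro t ht
          apply mul_le_mul_of_nonneg_right _ (hvnn t)
          apply Real.exp_le_exp.2
          nlinarith [ht.1]
        rw [intervalIntegral.integral_const_mul] at hb1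
        refine hb1.trans ?_
        apply mul_le_mul_of_nonneg_left _ (Real.exp_pos _).le
        -- ∫_k^{k+1} v ≤ ∫_0^{k+1} v ≤ C₁ + C₂ (k+1)
        have hk10 : (0:ℝ) < (k:ℝ)+1 := by positivity
        have hsplit2 : ∫ t in (0:ℝ)..((k:ℝ)+1), h (x t) * |u t|
            = (∫ t in (0:ℝ)..(k:ℝ), h (x t) * |u t|)
              + ∫ t in ((k:ℝ))..((k:ℝ)+1), h (x t) * |u t| := by
          symm
          apply intervalIntegral.integral_add_adjacent_intervals
          · exact (hvT ((k:ℝ)+1) hk10).mono_set (by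
              rw [Set.uIcc_of_le (by positivity : (0:ℝ) ≤ (k:ℝ)), Set.uIcc_of_le hk10.le]
              exact Set.Icc_subset_Icc le_rfl (by linarith))
          · exact (hvT ((k:ℝ)+1) hk10).mono_set (by
              rw [Set.uIcc_of_le (hpiece2 k), Set.uIcc_of_le hk10.le]
              exact Set.Icc_subset_Icc (by positivity) le_rfl)
        have hnn2 : 0 ≤ ∫ t in (0:ℝ)..(k:ℝ), h (x t) * |u t| :=
          intervalIntegral.integral_nonneg (by positivity) (fun t _ => hvnn t)
        have hvb := hvbound ((k:ℝ)+1) hk10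
        rw [hsplit2] at hvb
        have : C₂ * ((k:ℝ)+1) = (b₀/Real.sqrt c) * ((k:ℝ)+1) := by rw [hC₂def]
        rw [hC₁def, this]
        linarith
      calc ∑ k ∈ Finset.range n, ∫ t in ((k:ℕ):ℝ)..((k+1:ℕ):ℝ),
              Real.exp (-ρ*t) * (h (x t) * |u t|)
          ≤ ∑ k ∈ Finset.range n, Real.exp (-ρ*k) * (C₁ + C₂ * ((k:ℝ)+1)) := by
            apply Finset.sum_le_sum
            intro k hk
            exact hpiecebound k (Finset.mem_range.1 hk)
        _ ≤ S := Summable.sum_le_tsum _ (fun k _ => htermnn k) hsummable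
  -- measurability of f₁
  have hxms : AEStronglyMeasurable x (volume.restrict (Set.Ioi (0:ℝ))) :=
    (hxcont.mono Set.Ioi_subset_Ici_self).aestronglyMeasurable measurableSet_Ioi
  have hf₁ms : AEStronglyMeasurable f₁ (volume.restrict (Set.Ioi (0:ℝ))) := by
    apply AEStronglyMeasurable.mul
    · exact (Continuous.aestronglyMeasurable (by fun_prop))
    · exact ((hhc.comp_continuousOn (hxcont.mono Set.Ioi_subset_Ici_self)).aestronglyMeasurable
        measurableSet_Ioi).mul humeas.aestronglyMeasurable.restrict
  have hf₁int : IntegrableOn f₁ (Set.Ioi (0:ℝ)) := by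
    apply MeasureTheory.integrableOn_Ioi_of_intervalIntegral_norm_bounded S 0
      (b := fun n : ℕ => (n:ℝ)) (l := atTop) ?_ tendsto_natCast_atTop_atTop
      (Filter.Eventually.of_forall hnormbound)
    intro n
    rcases Nat.eq_zero_or_pos n with hn | hn
    · subst hn
      simp only [Nat.cast_zero, Set.Ioc_self]
      exact integrableOn_empty
    · have hn0 : (0:ℝ) < (n:ℝ) := by exact_mod_cast hn
      apply Integrable.mono' (g := fun t => |u t|)
        (((huloc (n:ℝ) hn0).mono_set Set.Ioc_subset_Icc_self).abs)
        (hf₁ms.mono_measure (Measure.restrict_mono Set.Ioc_subset_Ioi_self le_rfl))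
      filter_upwards [ae_restrict_mem measurableSet_Ioc] with t ht
      rw [hf₁norm t]
      have h1 : Real.exp (-ρ*t) ≤ 1 := by
        rw [Real.exp_le_one_iff]
        nlinarith [ht.1]
      have h2 : h (x t) ≤ 1 := gauss_le_one hc (x t)
      nlinarith [hvnn t, abs_nonneg (u t), (hhpos (x t)).le]
  -- integrability of the discounted square of the state
  have hx2int : IntegrableOn (fun t => Real.exp (-ρ*t) * (x t)^2) (Set.Ioi (0:ℝ)) := by
    apply Integrable.mono' (g := fun t => (2/c) * |g0 t| + (4/c) * f₁ t)
    · exact ((hint.abs.const_mul _)).add (hf₁int.const_mul _)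
    · apply AEStronglyMeasurable.mul
      · exact (Continuous.aestronglyMeasurable (by fun_prop))
      · exact (hxms.pow 2)
    · have haeIoi : ∀ᵐ t ∂(volume.restrict (Set.Ioi (0:ℝ))), t ∈ Set.Ici (0:ℝ) → 0 < u t :=
        ae_restrict_of_ae hae
      filter_upwards [haeIoi, ae_restrict_mem measurableSet_Ioi] with t hut ht
      have ht0 : (0:ℝ) ≤ t := le_of_lt ht
      have hu : 0 < u t := hut ht0
      have hy : 0 ≤ x t := hxnn t ht0
      have hepos : 0 < Real.exp (-ρ*t) := Real.exp_pos _
      have hnorm : ‖Real.exp (-ρ*t) * (x t)^2‖ = Real.exp (-ρ*t) * (x t)^2 := by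
        rw [Real.norm_eq_abs, abs_of_nonneg (by positivity)]
      rw [hnorm]
      have habs0 : 0 ≤ |g0 t| := abs_nonneg _
      have hf₁nn : 0 ≤ f₁ t := by
        rw [hf₁def]
        have : 0 ≤ h (x t) * u t := mul_nonneg (hhpos _).le hu.le
        positivity
      rcases le_or_gt (c*(x t)^2/2) (Real.log (u t)) with hcase | hcase
      · -- large control
        have h1 : Real.exp (c*(x t)^2/2) ≤ u t := by
          rw [← Real.exp_log hu]
          exact Real.exp_le_exp.2 hcase
        have h2 : h (x t) * Real.exp (c*(x t)^2/2) = Real.exp (c*(x t)^2/4) := by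
          rw [hhdef]
          rw [← Real.exp_add]
          ring_nf
        have h3 : Real.exp (c*(x t)^2/4) ≤ h (x t) * u t := by
          rw [← h2]
          exact mul_le_mul_of_nonneg_left h1 (hhpos _).le
        have h4 : c*(x t)^2/4 ≤ Real.exp (c*(x t)^2/4) := by
          have := Real.add_one_le_exp (c*(x t)^2/4)
          linarith
        have h5 : c*(x t)^2/4 ≤ h (x t) * u t := le_trans h4 h3
        have h6 : Real.exp (-ρ*t) * (c*(x t)^2/4) ≤ Real.exp (-ρ*t) * (h (x t) * u t) :=
          mul_le_mul_of_nonneg_left h5 hepos.le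
        -- target
        have h7 : Real.exp (-ρ*t) * (x t)^2 = (4/c) * (Real.exp (-ρ*t) * (c*(x t)^2/4)) := by
          field_simp
        rw [h7]
        have h8 : (4/c) * (Real.exp (-ρ*t) * (c*(x t)^2/4))
            ≤ (4/c) * (Real.exp (-ρ*t) * (h (x t) * u t)) :=
          mul_le_mul_of_nonneg_left h6 (by positivity)
        calc (4/c) * (Real.exp (-ρ*t) * (c*(x t)^2/4))
            ≤ (4/c) * f₁ t := h8
          _ ≤ (2/c) * |g0 t| + (4/c) * f₁ t := by
              have : 0 ≤ (2/c) * |g0 t| := by positivity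
              linarith
      · -- small control
        have h1 : g0 t ≤ Real.exp (-ρ*t) * (-(c*(x t)^2/2)) := by
          rw [hg0def]
          apply mul_le_mul_of_nonneg_left _ hepos.le
          linarith
        have h2 : Real.exp (-ρ*t) * (c*(x t)^2/2) ≤ |g0 t| := by
          have h3 : g0 t ≤ -(Real.exp (-ρ*t) * (c*(x t)^2/2)) := by
            have : Real.exp (-ρ*t) * (-(c*(x t)^2/2)) = -(Real.exp (-ρ*t) * (c*(x t)^2/2)) := by
              ring
            linarith [h1, this.le, this.ge]
          have := neg_le_abs (g0 t)
          linarith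
        have h4 : Real.exp (-ρ*t) * (x t)^2 = (2/c) * (Real.exp (-ρ*t) * (c*(x t)^2/2)) := by
          field_simp
        rw [h4]
        have h5 : (2/c) * (Real.exp (-ρ*t) * (c*(x t)^2/2)) ≤ (2/c) * |g0 t| :=
          mul_le_mul_of_nonneg_left h2 (by positivity)
        have h6 : 0 ≤ (4/c) * f₁ t := by positivity
        linarith
  -- main constants
  have h2c : (0:ℝ) < 2*c := by linarith
  have hs2c : 0 < Real.sqrt (2*c) := Real.sqrt_pos.2 h2c
  set A : ℝ := (ρ + b₀) / Real.sqrt (2*c) with hAdef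
  have hA0 : 0 < A := by positivity
  set M : ℝ := Real.log A - 1/2 with hMdef
  -- the value of M
  have hMval : M = Real.log ((ρ + b₀) / Real.sqrt (2 * Real.exp 1 * c)) := by
    have he1 : (0:ℝ) < Real.exp 1 := Real.exp_pos 1
    have hse : 0 < Real.sqrt (Real.exp 1) := Real.sqrt_pos.2 he1
    have hprod : 2 * Real.exp 1 * c = (2*c) * Real.exp 1 := by ring
    have hsplit : Real.sqrt (2 * Real.exp 1 * c)
        = Real.sqrt (2*c) * Real.sqrt (Real.exp 1) := by
      rw [hprod, Real.sqrt_mul h2c.le]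
    have hloge : Real.log (Real.sqrt (Real.exp 1)) = 1/2 := by
      rw [Real.log_sqrt he1.le, Real.log_exp]
    have hρb : (0:ℝ) < ρ + b₀ := by linarith
    have hld1 : Real.log ((ρ+b₀)/Real.sqrt (2*c))
        = Real.log (ρ+b₀) - Real.log (Real.sqrt (2*c)) := Real.log_div hρb.ne' hs2c.ne'
    have hld2 : Real.log ((ρ+b₀)/(Real.sqrt (2*c)*Real.sqrt (Real.exp 1)))
        = Real.log (ρ+b₀) - (Real.log (Real.sqrt (2*c)) + Real.log (Real.sqrt (Real.exp 1))) := by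
      rw [Real.log_div hρb.ne' (mul_ne_zero hs2c.ne' hse.ne'),
        Real.log_mul hs2c.ne' hse.ne']
    rw [hMdef, hAdef, hsplit, hld1, hld2, hloge]
    ring
  -- main estimate for each horizon T
  have hmain : ∀ T : ℝ, 0 < T → ∫ t in (0:ℝ)..T, g0 t ≤
      (Real.exp (-ρ*T) * x T - x₀) / A + M * ((1 - Real.exp (-ρ*T))/ρ) := by
    intro T hT
    have hIccIci : Set.Icc (0:ℝ) T ⊆ Set.Ici 0 := Set.Icc_subset_Ici_self
    -- pointwise bound
    have hptw : ∀ᵐ t ∂(volume.restrict (Set.Icc (0:ℝ) T)), g0 t ≤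
        (1/A) * (Real.exp (-ρ*t) * w t - ρ * (Real.exp (-ρ*t) * x t))
          + M * Real.exp (-ρ*t) := by
      filter_upwards [ae_restrict_of_ae_restrict_of_subset hIccIci hupos,
        ae_restrict_mem measurableSet_Icc] with t hut htmem
      have ht0 : 0 ≤ t := htmem.1
      have hy : 0 ≤ x t := hxnn t ht0
      have hepos : 0 < Real.exp (-ρ*t) := Real.exp_pos _
      have hlog : Real.log (u t) ≤ Real.log A + u t / A - 1 := by
        have hd := Real.log_le_sub_one_of_pos (div_pos hut hA0)
        rw [Real.log_div (ne_of_gt hut) hA0.ne'] at hd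
        linarith
      have hub : u t ≤ w t + b₀ * x t := hule t ht0
      have hsqrt : (ρ + b₀) / A = Real.sqrt (2*c) := by
        rw [hAdef]
        field_simp
      have hquad : Real.sqrt (2*c) * x t - c * (x t)^2 ≤ 1/2 := by
        nlinarith [sq_nonneg (Real.sqrt (2*c) * x t - 1), Real.sq_sqrt h2c.le]
      have hcore : Real.log (u t) - c * (x t)^2 ≤ (w t - ρ * x t)/A + M := by
        have e2 : u t / A ≤ (w t + b₀ * x t)/A := (div_le_div_iff_of_pos_right hA0).2 hub
        have e3 : (w t + b₀ * x t)/A = w t/A + (b₀ * x t)/A := by ring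
        have e4 : (w t - ρ * x t)/A = w t/A - (ρ * x t)/A := by ring
        have e5 : (ρ * x t)/A + (b₀ * x t)/A = ((ρ + b₀)/A) * x t := by ring
        have e6 : ((ρ + b₀)/A) * x t = Real.sqrt (2*c) * x t := by rw [hsqrt]
        have e7 : Real.log A - 1 + Real.sqrt (2*c) * x t - c * (x t)^2 ≤ M := by
          rw [hMdef]
          linarith
        linarith
      have := mul_le_mul_of_nonneg_left hcore hepos.le
      calc g0 t = Real.exp (-ρ*t) * (Real.log (u t) - c * (x t)^2) := rfl
        _ ≤ Real.exp (-ρ*t) * ((w t - ρ * x t)/A + M) := this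
        _ = (1/A) * (Real.exp (-ρ*t) * w t - ρ * (Real.exp (-ρ*t) * x t))
              + M * Real.exp (-ρ*t) := by ring
    -- integrate the pointwise bound
    have hg0T : IntervalIntegrable g0 volume 0 T := by
      rw [intervalIntegrable_iff, Set.uIoc_of_le hT.le]
      exact hint.mono_set Set.Ioc_subset_Ioi_self
    have hewT : IntervalIntegrable (fun t => Real.exp (-ρ*t) * w t) volume 0 T := by
      refine (hwT T hT).continuousOn_mul ?_
      fun_prop
    have hexT : IntervalIntegrable (fun t => ρ * (Real.exp (-ρ*t) * x t)) volume 0 T := by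
      apply ContinuousOn.intervalIntegrable
      apply ContinuousOn.mul continuousOn_const
      apply ContinuousOn.mul (by fun_prop)
      rw [Set.uIcc_of_le hT.le]
      exact hxcont.mono hIccIci
    have heT : IntervalIntegrable (fun t => Real.exp (-ρ*t)) volume 0 T :=
      (by fun_prop : Continuous fun t : ℝ => Real.exp (-ρ*t)).intervalIntegrable _ _
    have hRHSint : IntervalIntegrable (fun t =>
        (1/A) * (Real.exp (-ρ*t) * w t - ρ * (Real.exp (-ρ*t) * x t))
          + M * Real.exp (-ρ*t)) volume 0 T :=
      (((hewT.sub hexT).const_mul _)).add (heT.const_mul _)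
    have hint1 := intervalIntegral.integral_mono_ae_restrict hT.le hg0T hRHSint hptw
    refine hint1.trans ?_
    rw [intervalIntegral.integral_add ((hewT.sub hexT).const_mul _) (heT.const_mul _),
      intervalIntegral.integral_const_mul, intervalIntegral.integral_const_mul]
    -- the exponential integral
    have hexp_int : ∫ t in (0:ℝ)..T, Real.exp (-ρ*t) = (1 - Real.exp (-ρ*T))/ρ := by
      have := integral_rho_exp ρ 0 T
      rw [intervalIntegral.integral_const_mul] at this
      have h0 : Real.exp (-ρ*0) = 1 := by norm_num
      rw [h0] at this
      rw [eq_div_iff hρ.ne']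
      linarith
    rw [hexp_int]
    -- integration by parts inequality
    have hparts := parts_ineq hρ hT (hwT T hT) (hxcont.mono hIccIci) (hxw T hT)
    have h1A : (0:ℝ) ≤ 1/A := by positivity
    have := mul_le_mul_of_nonneg_left hparts h1A
    rw [hx0] at this
    have heq2 : (1/A) * (Real.exp (-ρ*T) * x T - x₀) = (Real.exp (-ρ*T) * x T - x₀)/A := by
      ring
    rw [heq2] at this
    rw [intervalIntegral.integral_sub hewT hexT] at this ⊢
    linarith
  -- limit of the interval integrals
  have htends : Tendsto (fun T : ℝ => ∫ t in (0:ℝ)..T, g0 t) atTop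
      (𝓝 (objective ρ c u x)) := by
    exact MeasureTheory.intervalIntegral_tendsto_integral_Ioi 0 hint tendsto_id
  -- conclusion via an ε-argument
  have hgoal : objective ρ c u x ≤ M / ρ := by
    refine le_of_forall_pos_le_add fun ε hε => ?_
    have hev1 : ∀ᶠ T in (atTop : Filter ℝ), objective ρ c u x - ε/3 ≤ ∫ t in (0:ℝ)..T, g0 t :=
      htends.eventually (eventually_ge_nhds (by linarith))
    have hev2 : ∀ᶠ T in (atTop : Filter ℝ), |M| * Real.exp (-ρ*T) / ρ ≤ ε/3 := by
      have hexp : Tendsto (fun T : ℝ => Real.exp (-ρ*T)) atTop (𝓝 0) := by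
        have h1 : Tendsto (fun T : ℝ => ρ * T) atTop atTop :=
          Tendsto.const_mul_atTop hρ tendsto_id
        have h2 := Real.tendsto_exp_neg_atTop_nhds_zero.comp h1
        refine h2.congr fun T => ?_
        simp only [Function.comp_apply]
        ring_nf
      have h3 : Tendsto (fun T : ℝ => |M| * Real.exp (-ρ*T) / ρ) atTop (𝓝 0) := by
        have := (hexp.const_mul |M|).div_const ρ
        simpa using this
      exact h3.eventually (eventually_le_nhds (by linarith))
    have hev3 : ∀ᶠ T in (atTop : Filter ℝ), (0:ℝ) < T := eventually_gt_atTop 0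
    have hfreq : ∃ᶠ T in (atTop : Filter ℝ), Real.exp (-ρ*T) * x T < A * ε / 3 := by
      by_contra hcon
      rw [Filter.not_frequently] at hcon
      obtain ⟨T₁, hT₁⟩ := Filter.eventually_atTop.1 (hcon.and (eventually_ge_atTop (0:ℝ)))
      have hδ : 0 < A * ε / 3 := by positivity
      have habsurd : IntegrableOn (fun _ : ℝ => (A*ε/3)^2) (Set.Ioi T₁) := by
        have hT₁0 : 0 ≤ T₁ := by
          have := hT₁ T₁ le_rfl
          exact this.2
        apply Integrable.mono' (hx2int.mono_set (Set.Ioi_subset_Ioi hT₁0))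
          aestronglyMeasurable_const
        filter_upwards [ae_restrict_mem measurableSet_Ioi] with t ht
        have h1 := (hT₁ t (le_of_lt ht)).1
        rw [not_lt] at h1
        have ht0 : (0:ℝ) ≤ t := le_trans hT₁0 (le_of_lt ht)
        have h2 : 1 ≤ Real.exp (ρ*t) := by
          rw [← Real.exp_zero]
          apply Real.exp_le_exp.2
          positivity
        have h3 : Real.exp (-ρ*t) * Real.exp (-ρ*t) * Real.exp (ρ*t) = Real.exp (-ρ*t) := by
          rw [← Real.exp_add, ← Real.exp_add]
          ring_nf
        have h4 : (A*ε/3)^2 ≤ (Real.exp (-ρ*t) * x t)^2 * Real.exp (ρ*t) := by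
          have h5 : (A*ε/3)^2 ≤ (Real.exp (-ρ*t) * x t)^2 := by
            apply sq_le_sq' _ h1
            nlinarith [mul_nonneg (Real.exp_pos (-ρ*t)).le (hxnn t ht0)]
          nlinarith [sq_nonneg (Real.exp (-ρ*t) * x t), Real.exp_pos (ρ*t)]
        have h6 : (Real.exp (-ρ*t) * x t)^2 * Real.exp (ρ*t) = Real.exp (-ρ*t) * (x t)^2 := by
          have : (Real.exp (-ρ*t) * x t)^2 = Real.exp (-ρ*t) * Real.exp (-ρ*t) * (x t)^2 := by
            ring
          rw [this]
          nlinarith [h3]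
        rw [Real.norm_eq_abs, abs_of_nonneg (by positivity : (0:ℝ) ≤ (A*ε/3)^2)]
        rw [h6] at h4
        exact h4
      rw [integrableOn_const_iff (C := (A*ε/3)^2) (hC := enorm_ne_top)] at habsurd
      rcases habsurd with h | h
      · rw [enorm_eq_zero] at h
        nlinarith
      · rw [Real.volume_Ioi] at h
        exact (lt_irrefl _ h)
    obtain ⟨T, ⟨⟨hc1, hc2⟩, hc3⟩, hc4⟩ :=
      (((hev1.and hev2).and hev3).and_frequently hfreq).exists
    have hm := hmain T hc3
    have hb1 : (Real.exp (-ρ*T) * x T - x₀) / A ≤ ε/3 := by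
      rw [div_le_iff₀ hA0]
      nlinarith [hc4, hx₀]
    have hb2 : M * ((1 - Real.exp (-ρ*T))/ρ) ≤ M/ρ + |M| * Real.exp (-ρ*T) / ρ := by
      have he := Real.exp_pos (-ρ*T)
      have heq3 : M * ((1 - Real.exp (-ρ*T))/ρ) = (M * (1 - Real.exp (-ρ*T)))/ρ := by ring
      have heq4 : M/ρ + |M| * Real.exp (-ρ*T) / ρ = (M + |M| * Real.exp (-ρ*T))/ρ := by ring
      rw [heq3, heq4]
      apply (div_le_div_iff_of_pos_right hρ).2
      have h5 : -M * Real.exp (-ρ*T) ≤ |M| * Real.exp (-ρ*T) :=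
        mul_le_mul_of_nonneg_right (neg_le_abs M) he.le
      nlinarith [h5]
    linarith
  rw [hMval] at hgoal
  calc objective ρ c u x ≤ Real.log ((ρ + b₀) / Real.sqrt (2 * Real.exp 1 * c)) / ρ := hgoal
    _ = (1 / ρ) * Real.log ((ρ + b₀) / Real.sqrt (2 * Real.exp 1 * c)) := by ring
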